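/- Let μ be a weakly compact cardinal and X a linearly ordered set of regular cardinality λ ≥ μ. Then X contains a λ-full subset of order type μ (or reverse order type μ), or a subset of order type λ (or reverse order type λ). -/

import Mathlib

open Cardinal Set

universe u

/-- `Y` is `l`-full on the right in `X`: for every `y ∈ Y`, the union of the
intervals `(y, y')_X` over larger elements `y' ∈ Y` has cardinality `l`. -/
def FullRight {X : Type u} [LinearOrder X] (l : Cardinal.{u}) (Y : Set X) : Prop :=
  ∀ y ∈ Y, #{x : X | ∃ y' ∈ Y, y < y' ∧ y < x ∧ x < y'} = l

/-- `Y` is `l`-full on the left in `X`. -/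
def FullLeft {X : Type u} [LinearOrder X] (l : Cardinal.{u}) (Y : Set X) : Prop :=
  ∀ y ∈ Y, #{x : X | ∃ y' ∈ Y, y' < y ∧ y' < x ∧ x < y} = l

/-- `Y` is completely `l`-full in `X`: every interval of `X` between two
elements of `Y` has cardinality `l`. -/
def CompletelyFull {X : Type u} [LinearOrder X] (l : Cardinal.{u}) (Y : Set X) : Prop :=
  ∀ y ∈ Y, ∀ y' ∈ Y, y < y' → #{x : X | y < x ∧ x < y'} = l

/-- Order-theoretic characterization of weak compactness: `m` is uncountable
and every linear order of cardinality `m` has a subset of order type `m` or of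
reverse order type `m`. -/
def IsWeaklyCompact (m : Cardinal.{u}) : Prop :=
  Cardinal.aleph0 < m ∧ ∀ (X : Type u) [LinearOrder X], #X = m →
    (∃ f : m.ord.ToType → X, StrictMono f) ∨ (∃ f : m.ord.ToType → X, StrictAnti f)

/-! ### Auxiliary material -/

/-- `a` and `b` are `l`-close: the interval between them has size `< l`. -/
def Close (l : Cardinal.{u}) {X : Type u} [LinearOrder X] (a b : X) : Prop :=
  #(Set.Ioo (min a b) (max a b)) < l

lemma close_comm {l : Cardinal.{u}} {X : Type u} [LinearOrder X] {a b : X} :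
    Close l a b ↔ Close l b a := by
  unfold Close; rw [min_comm, max_comm]

lemma close_self {l : Cardinal.{u}} {X : Type u} [LinearOrder X] (h : 0 < l) (a : X) :
    Close l a a := by
  simpa [Close] using h

lemma le_mk_Ioo_of_not_close {l : Cardinal.{u}} {X : Type u} [LinearOrder X] {a b : X}
    (hab : a < b) (h : ¬ Close l a b) : l ≤ #(Set.Ioo a b) := by
  simp only [Close, min_eq_left hab.le, max_eq_right hab.le] at h
  exact not_lt.1 h

open scoped Classical in
/-- The greedy recursion: at each stage pick an element of `S` avoiding the
forbidden sets of all previously chosen elements. -/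
noncomputable def greedy {X : Type u} (o : Ordinal.{u}) (S : Set X) (B : X → Set X)
    (x0 : X) (i : o.ToType) : X :=
  if h : (S \ ⋃ j : {j : o.ToType // j < i}, B (greedy o S B x0 j.1)).Nonempty then h.choose
  else x0
termination_by i
decreasing_by all_goals exact j.2

open scoped Classical in
lemma greedy_eq {X : Type u} (o : Ordinal.{u}) (S : Set X) (B : X → Set X) (x0 : X)
    (i : o.ToType) :
    greedy o S B x0 i =
      if h : (S \ ⋃ j : {j : o.ToType // j < i}, B (greedy o S B x0 j.1)).Nonempty then h.choose
      else x0 := by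
  rw [greedy]

lemma exists_greedy {X : Type u} {o : Ordinal.{u}} {l : Cardinal.{u}} (hl : l.IsRegular)
    (hI : ∀ i : o.ToType, #(Set.Iio i) < l) (S : Set X) (hS : l ≤ #S) (B : X → Set X)
    (hB : ∀ y ∈ S, #(B y) < l) :
    ∃ f : o.ToType → X, (∀ i, f i ∈ S) ∧ ∀ j i : o.ToType, j < i → f i ∉ B (f j) := by
  classical
  have hSne : S.Nonempty := by
    rw [nonempty_iff_ne_empty]
    rintro rfl
    simp only [mk_emptyCollection] at hS
    exact (hl.pos.trans_le hS).false
  obtain ⟨x0, -⟩ := hSne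
  have key : ∀ i : o.ToType, greedy o S B x0 i ∈ S ∧
      ∀ j, j < i → greedy o S B x0 i ∉ B (greedy o S B x0 j) := by
    intro i
    refine wellFounded_lt.induction
      (C := fun i => greedy o S B x0 i ∈ S ∧
        ∀ j, j < i → greedy o S B x0 i ∉ B (greedy o S B x0 j)) i fun i IH => ?_
    have hι : #{j : o.ToType // j < i} < l := hI i
    have hUlt : #(⋃ j : {j : o.ToType // j < i}, B (greedy o S B x0 ↑j)) < l :=
      (card_iUnion_lt_iff_forall_of_isRegular hl hι).2 fun j => hB _ (IH j j.2).1
    have hne : (S \ ⋃ j : {j : o.ToType // j < i}, B (greedy o S B x0 ↑j)).Nonempty := by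
      rw [diff_nonempty]
      intro hsub
      exact absurd (hS.trans (mk_le_mk_of_subset hsub)) hUlt.not_ge
    have hmem : greedy o S B x0 i ∈
        S \ ⋃ j : {j : o.ToType // j < i}, B (greedy o S B x0 ↑j) := by
      rw [greedy_eq o S B x0 i, dif_pos hne]
      exact hne.choose_spec
    exact ⟨hmem.1, fun j hj hBj => hmem.2 (mem_iUnion.2 ⟨⟨j, hj⟩, hBj⟩)⟩
  exact ⟨greedy o S B x0, fun i => (key i).1, fun j i hj => (key i).2 j hj⟩

/-- Theorem 4.6: if `μ` is weakly compact and `X` is a linear order of regular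
cardinality `l ≥ μ`, then `X` has an `l`-full subset of (reverse) order type
`μ`, or a subset of (reverse) order type `l`. -/
theorem stmt17 (μ l : Cardinal.{u}) (hμ : IsWeaklyCompact μ) (hl : l.IsRegular)
    (hμl : μ ≤ l) (X : Type u) [LinearOrder X] (hX : #X = l) :
    (∃ f : μ.ord.ToType → X,
        (StrictMono f ∧ FullRight l (Set.range f)) ∨
        (StrictAnti f ∧ FullLeft l (Set.range f))) ∨
    (∃ f : l.ord.ToType → X, StrictMono f ∨ StrictAnti f) := by
  classical
  have h1l : (1 : Cardinal) < l := one_lt_aleph0.trans_le hl.aleph0_le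
  by_cases hA : ∃ x0 : X,
      l ≤ #{c : X | x0 < c ∧ #(Set.Ioo x0 c) < l} ∨
      l ≤ #{c : X | c < x0 ∧ #(Set.Ioo c x0) < l}
  · -- some "small-interval class" is large: extract a monotone `l`-sequence
    right
    obtain ⟨x0, hR | hL⟩ := hA
    · have hB : ∀ y ∈ {c : X | x0 < c ∧ #(Set.Ioo x0 c) < l},
          #{c : X | (x0 < c ∧ #(Set.Ioo x0 c) < l) ∧ c ≤ y} < l := by
        intro y hy
        refine lt_of_le_of_lt (mk_le_mk_of_subset
          (?_ : _ ⊆ Set.Ioo x0 y ∪ {y})) ?_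
        · rintro c ⟨⟨hx0c, -⟩, hcy⟩
          rcases hcy.lt_or_eq with h | rfl
          · exact Or.inl ⟨hx0c, h⟩
          · exact Or.inr rfl
        · refine (mk_union_le _ _).trans_lt (add_lt_of_lt hl.aleph0_le hy.2 ?_)
          simpa using h1l
      obtain ⟨f, hfS, hfB⟩ := exists_greedy (o := l.ord) hl
        (fun i => Cardinal.mk_Iio_ord_toType i)
        {c : X | x0 < c ∧ #(Set.Ioo x0 c) < l} hR
        (fun y => {c : X | (x0 < c ∧ #(Set.Ioo x0 c) < l) ∧ c ≤ y}) hB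
      refine ⟨f, Or.inl fun a b hab => ?_⟩
      have h1 := hfB a b hab
      by_contra hle
      exact h1 ⟨hfS b, not_lt.1 hle⟩
    · have hB : ∀ y ∈ {c : X | c < x0 ∧ #(Set.Ioo c x0) < l},
          #{c : X | (c < x0 ∧ #(Set.Ioo c x0) < l) ∧ y ≤ c} < l := by
        intro y hy
        refine lt_of_le_of_lt (mk_le_mk_of_subset
          (?_ : _ ⊆ Set.Ioo y x0 ∪ {y})) ?_
        · rintro c ⟨⟨hcx0, -⟩, hyc⟩
          rcases hyc.lt_or_eq with h | rfl
          · exact Or.inl ⟨h, hcx0⟩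
          · exact Or.inr rfl
        · refine (mk_union_le _ _).trans_lt (add_lt_of_lt hl.aleph0_le hy.2 ?_)
          simpa using h1l
      obtain ⟨f, hfS, hfB⟩ := exists_greedy (o := l.ord) hl
        (fun i => Cardinal.mk_Iio_ord_toType i)
        {c : X | c < x0 ∧ #(Set.Ioo c x0) < l} hL
        (fun y => {c : X | (c < x0 ∧ #(Set.Ioo c x0) < l) ∧ y ≤ c}) hB
      refine ⟨f, Or.inr fun a b hab => ?_⟩
      have h1 := hfB a b hab
      by_contra hle
      exact h1 ⟨hfS b, not_lt.1 hle⟩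
  · -- all classes are small: find `l` pairwise far-apart points, then use
    -- weak compactness on `μ` of them
    left
    push_neg at hA
    have hclass : ∀ t : X, #{c : X | Close l t c} < l := by
      intro t
      refine lt_of_le_of_lt (mk_le_mk_of_subset
        (?_ : _ ⊆ {c : X | c < t ∧ #(Set.Ioo c t) < l} ∪
          ({t} ∪ {c : X | t < c ∧ #(Set.Ioo t c) < l}))) ?_
      · intro c hc
        rcases lt_trichotomy c t with h | rfl | h
        · refine Or.inl ⟨h, ?_⟩
          simp only [Close, mem_setOf_eq] at hc
          rwa [min_eq_right h.le, max_eq_left h.le] at hc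
        · exact Or.inr (Or.inl rfl)
        · refine Or.inr (Or.inr ⟨h, ?_⟩)
          simp only [Close, mem_setOf_eq] at hc
          rwa [min_eq_left h.le, max_eq_right h.le] at hc
      · refine (mk_union_le _ _).trans_lt (add_lt_of_lt hl.aleph0_le (hA t).2 ?_)
        refine (mk_union_le _ _).trans_lt (add_lt_of_lt hl.aleph0_le ?_ (hA t).1)
        simpa using h1l
    have hzorn : ∀ c ⊆ {T : Set X | T.Pairwise fun a b => ¬ Close l a b},
        IsChain (· ⊆ ·) c → ∃ ub ∈ {T : Set X | T.Pairwise fun a b => ¬ Close l a b},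
          ∀ s ∈ c, s ⊆ ub := by
      intro c hcS hchain
      refine ⟨⋃₀ c, ?_, fun s hs => subset_sUnion_of_mem hs⟩
      rintro a ⟨s, hs, has⟩ b ⟨t, ht, hbt⟩ hab
      rcases eq_or_ne s t with rfl | hst
      · exact hcS hs has hbt hab
      · rcases hchain hs ht hst with h | h
        · exact hcS ht (h has) hbt hab
        · exact hcS hs has (h hbt) hab
    obtain ⟨T, hT⟩ := zorn_subset {T : Set X | T.Pairwise fun a b => ¬ Close l a b} hzorn
    have hTpair : T.Pairwise fun a b => ¬ Close l a b := hT.1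
    have hcover : ∀ x : X, ∃ t ∈ T, Close l t x := by
      intro x
      by_contra hnc
      push_neg at hnc
      have hxT : x ∉ T := fun hx => hnc x hx (close_self hl.pos x)
      have hins : (insert x T) ∈ {T : Set X | T.Pairwise fun a b => ¬ Close l a b} := by
        simp only [mem_setOf_eq]
        rw [Set.pairwise_insert]
        exact ⟨hTpair, fun b hb _ =>
          ⟨fun h => hnc b hb (close_comm.1 h), hnc b hb⟩⟩
      exact hxT (hT.2 hins (subset_insert x T) (mem_insert x T))
    have hTbig : l ≤ #T := by
      by_contra hlt
      rw [not_le] at hlt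
      have hU : #(⋃ t : ↥T, {c : X | Close l ↑t c}) < l :=
        (card_iUnion_lt_iff_forall_of_isRegular hl hlt).2 fun t => hclass ↑t
      have hsub : (univ : Set X) ⊆ ⋃ t : ↥T, {c : X | Close l ↑t c} := by
        intro x _
        obtain ⟨t, ht, htx⟩ := hcover x
        exact mem_iUnion.2 ⟨⟨t, ht⟩, htx⟩
      have := (mk_le_mk_of_subset hsub).trans_lt hU
      rw [mk_univ, hX] at this
      exact this.false
    obtain ⟨S₀, hS₀T, hS₀card⟩ := le_mk_iff_exists_subset.1 (hμl.trans hTbig)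
    have hP : S₀.Pairwise fun a b => ¬ Close l a b := hTpair.mono hS₀T
    haveI : NoMaxOrder μ.ord.ToType := Cardinal.noMaxOrder hμ.1.le
    rcases hμ.2 ↥S₀ hS₀card with ⟨g, hg⟩ | ⟨g, hg⟩
    · refine ⟨fun i => (g i : X), Or.inl ⟨fun a b hab => Subtype.coe_lt_coe.2 (hg hab), ?_⟩⟩
      rintro y ⟨α, rfl⟩
      obtain ⟨β, hβ⟩ := exists_gt α
      have hab : ((g α : X)) < (g β : X) := Subtype.coe_lt_coe.2 (hg hβ)
      have hnE : ¬ Close l (g α : X) (g β : X) := hP (g α).2 (g β).2 (Subtype.coe_injective.ne (hg hβ).ne)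
      have hIoo : l ≤ #(Set.Ioo (g α : X) (g β : X)) := le_mk_Ioo_of_not_close hab hnE
      refine le_antisymm ((mk_set_le _).trans hX.le) (hIoo.trans (mk_le_mk_of_subset ?_))
      intro z hz
      exact ⟨(g β : X), ⟨β, rfl⟩, hab, hz.1, hz.2⟩
    · refine ⟨fun i => (g i : X), Or.inr ⟨fun a b hab => Subtype.coe_lt_coe.2 (hg hab), ?_⟩⟩
      rintro y ⟨α, rfl⟩
      obtain ⟨β, hβ⟩ := exists_gt α
      have hab : ((g β : X)) < (g α : X) := Subtype.coe_lt_coe.2 (hg hβ)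
      have hnE : ¬ Close l (g β : X) (g α : X) := hP (g β).2 (g α).2 (Subtype.coe_injective.ne (hg hβ).ne)
      have hIoo : l ≤ #(Set.Ioo (g β : X) (g α : X)) := le_mk_Ioo_of_not_close hab hnE
      refine le_antisymm ((mk_set_le _).trans hX.le) (hIoo.trans (mk_le_mk_of_subset ?_))
      intro z hz
      exact ⟨(g β : X), ⟨β, rfl⟩, hab, hz.1, hz.2⟩
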